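/- Identifying F = F_{2^f} with F₂^f via a self-complementary basis, a doubly-even code C ⊆ Fⁿ maps to a binary code C' ⊆ F₂^{nf} in which every codeword has Hamming weight divisible by 4. -/

import Mathlib

open Finset

private lemma zmod2_elim (a : ZMod 2) : a = 0 ∨ a = 1 := by revert a; decide

private lemma zmod2_add_self (a : ZMod 2) : a + a = 0 := by revert a; decide

private lemma sum_trichotomy {ι M : Type*} [Fintype ι] [LinearOrder ι] [AddCommMonoid M]
    (h : ι → ι → M) :
    ∑ i, ∑ k, h i k =
      (∑ x ∈ univ.filter (fun x : ι × ι => x.1 < x.2), (h x.1 x.2 + h x.2 x.1)) + ∑ i, h i i := by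
  classical
  have e1 : ∑ i, ∑ k, h i k = ∑ x : ι × ι, h x.1 x.2 := by
    exact (Fintype.sum_prod_type (f := fun x : ι × ι => h x.1 x.2)).symm
  rw [e1, ← Finset.sum_filter_add_sum_filter_not univ (fun x : ι × ι => x.1 < x.2),
    Finset.sum_add_distrib, add_assoc]
  congr 1
  have e2 : univ.filter (fun x : ι × ι => ¬ x.1 < x.2)
      = univ.filter (fun x : ι × ι => x.2 < x.1) ∪ univ.filter (fun x : ι × ι => x.1 = x.2) := by
    rw [← Finset.filter_or]
    apply Finset.filter_congr
    intro x _
    simp only [not_lt, le_iff_lt_or_eq]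
    constructor
    · rintro (h | h)
      · exact Or.inl h
      · exact Or.inr h.symm
    · rintro (h | h)
      · exact Or.inl h
      · exact Or.inr h.symm
  have hdisj : Disjoint (univ.filter (fun x : ι × ι => x.2 < x.1))
      (univ.filter (fun x : ι × ι => x.1 = x.2)) := by
    rw [Finset.disjoint_left]
    intro a ha hb
    simp only [Finset.mem_filter, Finset.mem_univ, true_and] at ha hb
    exact absurd hb (ne_of_gt ha)
  rw [e2, Finset.sum_union hdisj]
  congr 1
  · refine Finset.sum_nbij' Prod.swap Prod.swap ?_ ?_ ?_ ?_ ?_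
    · intro a ha; simp only [Finset.mem_filter, Finset.mem_univ, true_and] at ha ⊢; exact ha
    · intro a ha; simp only [Finset.mem_filter, Finset.mem_univ, true_and] at ha ⊢; exact ha
    · intro a _; rfl
    · intro a _; rfl
    · intro a _; rfl
  · refine Finset.sum_nbij' (fun x => x.1) (fun i => (i, i)) ?_ ?_ ?_ ?_ ?_
    · intro a _; exact Finset.mem_univ _
    · intro a _; simp
    · intro a ha
      simp only [Finset.mem_filter, Finset.mem_univ, true_and] at ha
      exact Prod.ext rfl ha
    · intro a _; rfl
    · intro a ha
      simp only [Finset.mem_filter, Finset.mem_univ, true_and] at ha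
      rw [← ha]

private lemma aux_comb {α : Type*} [Fintype α] [DecidableEq α] (r : α → α → Prop) [DecidableRel r]
    (htot : ∀ p q : α, p ≠ q → ¬ r p q → r q p) (hasym : ∀ p q : α, r p q → ¬ r q p)
    (hne : ∀ p q : α, r p q → p ≠ q)
    (t : α → ZMod 2)
    (hsum : ∑ p, t p = 0)
    (hpairs : ∑ x ∈ univ.filter (fun x : α × α => r x.1 x.2), t x.1 * t x.2 = 0) :
    4 ∣ (univ.filter (fun p => t p ≠ 0)).card := by
  classical
  set A : Finset α := univ.filter (fun p => t p ≠ 0) with hA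
  have h2 : 2 ∣ A.card := by
    have e : ((A.card : ℕ) : ZMod 2) = ∑ p, t p := by
      rw [hA, Finset.card_filter]
      push_cast
      refine Finset.sum_congr rfl fun p _ => ?_
      rcases zmod2_elim (t p) with h | h <;> simp [h]
    rw [hsum] at e
    exact (ZMod.natCast_eq_zero_iff _ 2).mp e
  set S1 : Finset (α × α) := A.offDiag.filter (fun x => r x.1 x.2) with hS1
  have hS1eq : S1 = univ.filter (fun x : α × α => r x.1 x.2 ∧ t x.1 ≠ 0 ∧ t x.2 ≠ 0) := by
    ext x
    simp only [hS1, hA, Finset.mem_filter, Finset.mem_offDiag, Finset.mem_univ, true_and]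
    constructor
    · rintro ⟨⟨h1, h2', _⟩, hr⟩; exact ⟨hr, h1, h2'⟩
    · rintro ⟨hr, h1, h2'⟩; exact ⟨⟨h1, h2', hne _ _ hr⟩, hr⟩
  have hS1par : 2 ∣ S1.card := by
    have e : ((S1.card : ℕ) : ZMod 2)
        = ∑ x ∈ univ.filter (fun x : α × α => r x.1 x.2), t x.1 * t x.2 := by
      rw [hS1eq, Finset.card_filter]
      push_cast
      rw [Finset.sum_filter]
      refine Finset.sum_congr rfl fun x _ => ?_
      by_cases hr : r x.1 x.2
      · simp only [hr, if_true, true_and]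
        rcases zmod2_elim (t x.1) with h1 | h1 <;> rcases zmod2_elim (t x.2) with h2' | h2' <;>
          simp [h1, h2']
      · simp [hr]
    rw [hpairs] at e
    exact (ZMod.natCast_eq_zero_iff _ 2).mp e
  have hoffcard : A.offDiag.card = 2 * S1.card := by
    have hswap : (A.offDiag.filter (fun x => ¬ r x.1 x.2)).card = S1.card := by
      refine Finset.card_nbij' Prod.swap Prod.swap ?_ ?_ ?_ ?_
      · intro a ha
        simp only [hS1, Finset.mem_coe, Finset.mem_filter, Finset.mem_offDiag] at ha ⊢
        obtain ⟨⟨h1, h2', h3⟩, h4⟩ := ha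
        exact ⟨⟨h2', h1, Ne.symm h3⟩, htot _ _ h3 h4⟩
      · intro a ha
        simp only [hS1, Finset.mem_coe, Finset.mem_filter, Finset.mem_offDiag] at ha ⊢
        obtain ⟨⟨h1, h2', h3⟩, h4⟩ := ha
        exact ⟨⟨h2', h1, Ne.symm h3⟩, hasym _ _ h4⟩
      · intro a _; rfl
      · intro a _; rfl
    have hx := Finset.card_filter_add_card_filter_not (s := A.offDiag)
      (p := fun x => r x.1 x.2)
    rw [hswap] at hx
    rw [← hx, hS1]
    omega
  have hoffd : A.offDiag.card = A.card * A.card - A.card := Finset.offDiag_card A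
  obtain ⟨m, hm⟩ := h2
  obtain ⟨s, hs⟩ := hS1par
  have hmm : m ≤ m * m := by nlinarith
  have hkey : 2 * m * (2 * m) = 4 * (m * m) := by ring
  rw [hoffcard, hm, hs] at hoffd
  rw [hkey] at hoffd
  rw [hm]
  generalize hK : m * m = K at hoffd hmm
  omega

theorem stmt_12 {F : Type*} [Field F] [Fintype F] [Algebra (ZMod 2) F] {f n : ℕ}
    (hcard : Fintype.card F = 2 ^ f)
    (b : Module.Basis (Fin f) (ZMod 2) F)
    (hb : ∀ i j, Algebra.trace (ZMod 2) F (b i * b j) = if i = j then 1 else 0)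
    (C : Submodule F (Fin n → F))
    (hde : ∀ c ∈ C, (∑ i, c i) = 0 ∧
      ∑ p ∈ univ.filter (fun p : Fin n × Fin n => p.1 < p.2), c p.1 * c p.2 = 0) :
    ∀ c ∈ C,
      4 ∣ (univ.filter (fun p : Fin n × Fin f => b.repr (c p.1) p.2 ≠ 0)).card := by
  classical
  intro c hc
  obtain ⟨hd1, hd2⟩ := hde c hc
  -- columns sum to zero
  have hcol : ∀ j, ∑ i, b.repr (c i) j = 0 := by
    intro j
    have h0 : (b.repr (∑ i, c i)) j = 0 := by rw [hd1, map_zero]; rfl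
    rw [map_sum] at h0
    rwa [Finsupp.finset_sum_apply] at h0
  -- trace formula
  have htr : ∀ (u : F) (l : Fin f), Algebra.trace (ZMod 2) F (b l * u) = b.repr u l := by
    intro u l
    conv_lhs => rw [← b.sum_repr u]
    rw [Finset.mul_sum, map_sum]
    have e : ∀ m : Fin f, Algebra.trace (ZMod 2) F (b l * b.repr u m • b m)
        = b.repr u m * (if l = m then 1 else 0) := by
      intro m
      rw [mul_smul_comm, map_smul, hb, smul_eq_mul]
    rw [Finset.sum_congr rfl (fun m _ => e m)]
    simp [mul_ite, mul_one, mul_zero, Finset.sum_ite_eq]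
  have hpairF : ∀ x y : F,
      (∑ j, b.repr x j * b.repr y j) = Algebra.trace (ZMod 2) F (x * y) := by
    intro x y
    conv_rhs => rw [← b.sum_repr x, Finset.sum_mul, map_sum]
    refine Finset.sum_congr rfl fun l _ => ?_
    rw [smul_mul_assoc, map_smul, htr, smul_eq_mul]
  have hdot : ∑ x ∈ univ.filter (fun x : Fin n × Fin n => x.1 < x.2),
      (∑ j, b.repr (c x.1) j * b.repr (c x.2) j) = 0 := by
    have e : ∀ x ∈ univ.filter (fun x : Fin n × Fin n => x.1 < x.2),
        (∑ j, b.repr (c x.1) j * b.repr (c x.2) j)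
          = Algebra.trace (ZMod 2) F (c x.1 * c x.2) := fun x _ => hpairF _ _
    rw [Finset.sum_congr rfl e, ← map_sum, hd2, map_zero]
  -- apply the combinatorial lemma with the lexicographic relation
  refine aux_comb (fun p q : Fin n × Fin f => p.1 < q.1 ∨ (p.1 = q.1 ∧ p.2 < q.2))
    ?_ ?_ ?_ (fun p => b.repr (c p.1) p.2) ?_ ?_
  · -- htot
    intro p q hpq hnr
    rcases lt_trichotomy p.1 q.1 with h | h | h
    · exact absurd (Or.inl h) hnr
    · rcases lt_trichotomy p.2 q.2 with h2 | h2 | h2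
      · exact absurd (Or.inr ⟨h, h2⟩) hnr
      · exact absurd (Prod.ext h h2) hpq
      · exact Or.inr ⟨h.symm, h2⟩
    · exact Or.inl h
  · -- hasym
    intro p q h hq
    rcases h with h | ⟨he, h⟩ <;> rcases hq with h' | ⟨he', h'⟩
    · exact lt_asymm h h'
    · exact (ne_of_lt h) he'.symm
    · exact (ne_of_lt h') he.symm
    · exact lt_asymm h h'
  · -- hne
    intro p q h
    rintro rfl
    rcases h with h | ⟨-, h⟩ <;> exact lt_irrefl _ h
  · -- hsum
    rw [Fintype.sum_prod_type, Finset.sum_comm]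
    exact Finset.sum_eq_zero fun j _ => hcol j
  · -- hpairs
    show ∑ x ∈ (univ : Finset ((Fin n × Fin f) × (Fin n × Fin f))).filter
        (fun x => x.1.1 < x.2.1 ∨ (x.1.1 = x.2.1 ∧ x.1.2 < x.2.2)),
        b.repr (c x.1.1) x.1.2 * b.repr (c x.2.1) x.2.2 = 0
    have hsplit : (univ : Finset ((Fin n × Fin f) × (Fin n × Fin f))).filter
          (fun x => x.1.1 < x.2.1 ∨ (x.1.1 = x.2.1 ∧ x.1.2 < x.2.2))
        = univ.filter (fun x => x.1.1 < x.2.1)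
          ∪ univ.filter (fun x => x.1.1 = x.2.1 ∧ x.1.2 < x.2.2) :=
      Finset.filter_or _ _ _
    have hdisj : Disjoint
        ((univ : Finset ((Fin n × Fin f) × (Fin n × Fin f))).filter (fun x => x.1.1 < x.2.1))
        (univ.filter (fun x => x.1.1 = x.2.1 ∧ x.1.2 < x.2.2)) := by
      rw [Finset.disjoint_left]
      intro a ha hb
      simp only [Finset.mem_filter, Finset.mem_univ, true_and] at ha hb
      exact absurd hb.1 (ne_of_lt ha)
    rw [hsplit, Finset.sum_union hdisj]
    -- abbreviations
    set fN : Finset (Fin n × Fin n) := univ.filter (fun y : Fin n × Fin n => y.1 < y.2) with hfN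
    set fF : Finset (Fin f × Fin f) := univ.filter (fun w : Fin f × Fin f => w.1 < w.2) with hfF
    set D : Fin n → Fin n → ZMod 2 :=
      fun i k => ∑ w ∈ fF, b.repr (c i) w.1 * b.repr (c k) w.2 with hD
    -- T1 = M1
    have hT1 : ∑ x ∈ (univ : Finset ((Fin n × Fin f) × (Fin n × Fin f))).filter
          (fun x => x.1.1 < x.2.1), b.repr (c x.1.1) x.1.2 * b.repr (c x.2.1) x.2.2
        = ∑ y ∈ fN, (∑ j, b.repr (c y.1) j) * (∑ l, b.repr (c y.2) l) := by
      have e1 : ∑ x ∈ (univ : Finset ((Fin n × Fin f) × (Fin n × Fin f))).filter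
            (fun x => x.1.1 < x.2.1), b.repr (c x.1.1) x.1.2 * b.repr (c x.2.1) x.2.2
          = ∑ z ∈ fN ×ˢ (univ : Finset (Fin f × Fin f)),
              b.repr (c z.1.1) z.2.1 * b.repr (c z.1.2) z.2.2 := by
        refine Finset.sum_nbij' (fun x => ((x.1.1, x.2.1), (x.1.2, x.2.2)))
          (fun z => ((z.1.1, z.2.1), (z.1.2, z.2.2))) ?_ ?_ ?_ ?_ ?_
        · intro a ha
          simp only [hfN, Finset.mem_filter, Finset.mem_univ, true_and, and_true,
            Finset.mem_product] at ha ⊢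
          exact ha
        · intro a ha
          simp only [hfN, Finset.mem_filter, Finset.mem_univ, true_and, Finset.mem_product] at ha ⊢
          exact ha.1
        · intro a _; rfl
        · intro a _; rfl
        · intro a _; rfl
      rw [e1, Finset.sum_product]
      refine Finset.sum_congr rfl fun y _ => ?_
      rw [Finset.sum_mul_sum]
      exact (Fintype.sum_prod_type _)
    -- T2 = M2
    have hT2 : ∑ x ∈ (univ : Finset ((Fin n × Fin f) × (Fin n × Fin f))).filter
          (fun x => x.1.1 = x.2.1 ∧ x.1.2 < x.2.2), b.repr (c x.1.1) x.1.2 * b.repr (c x.2.1) x.2.2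
        = ∑ i, D i i := by
      have e2 : ∑ x ∈ (univ : Finset ((Fin n × Fin f) × (Fin n × Fin f))).filter
            (fun x => x.1.1 = x.2.1 ∧ x.1.2 < x.2.2), b.repr (c x.1.1) x.1.2 * b.repr (c x.2.1) x.2.2
          = ∑ z ∈ (univ.filter (fun y : Fin n × Fin n => y.1 = y.2)) ×ˢ fF,
              b.repr (c z.1.1) z.2.1 * b.repr (c z.1.2) z.2.2 := by
        refine Finset.sum_nbij' (fun x => ((x.1.1, x.2.1), (x.1.2, x.2.2)))
          (fun z => ((z.1.1, z.2.1), (z.1.2, z.2.2))) ?_ ?_ ?_ ?_ ?_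
        · intro a ha
          simp only [hfF, Finset.mem_filter, Finset.mem_univ, true_and, Finset.mem_product] at ha ⊢
          exact ha
        · intro a ha
          simp only [hfF, Finset.mem_filter, Finset.mem_univ, true_and, Finset.mem_product] at ha ⊢
          exact ha
        · intro a _; rfl
        · intro a _; rfl
        · intro a _; rfl
      rw [e2, Finset.sum_product]
      refine Finset.sum_nbij' (fun y : Fin n × Fin n => y.1) (fun i => (i, i)) ?_ ?_ ?_ ?_ ?_
      · intro a _; exact Finset.mem_univ _
      · intro a _; simp
      · intro a ha
        simp only [Finset.mem_filter, Finset.mem_univ, true_and] at ha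
        exact Prod.ext rfl ha
      · intro a _; rfl
      · intro a ha
        simp only [Finset.mem_filter, Finset.mem_univ, true_and] at ha
        simp only [hD]
        rw [← ha]
    rw [hT1, hT2]
    -- key algebra
    have hfull : ∑ i, ∑ k, D i k = 0 := by
      simp only [hD]
      have e3 : ∑ i, ∑ k, ∑ w ∈ fF, b.repr (c i) w.1 * b.repr (c k) w.2
          = ∑ w ∈ fF, ∑ i, ∑ k, b.repr (c i) w.1 * b.repr (c k) w.2 := by
        calc ∑ i, ∑ k, ∑ w ∈ fF, b.repr (c i) w.1 * b.repr (c k) w.2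
            = ∑ i, ∑ w ∈ fF, ∑ k, b.repr (c i) w.1 * b.repr (c k) w.2 :=
              Finset.sum_congr rfl fun i _ => Finset.sum_comm
          _ = ∑ w ∈ fF, ∑ i, ∑ k, b.repr (c i) w.1 * b.repr (c k) w.2 := Finset.sum_comm
      rw [e3]
      refine Finset.sum_eq_zero fun w _ => ?_
      rw [← Finset.sum_mul_sum, hcol, zero_mul]
    have htri := sum_trichotomy D
    rw [hfull] at htri
    set P : ZMod 2 := ∑ y ∈ fN, (D y.1 y.2 + D y.2 y.1) with hP
    have hM2P : ∑ i, D i i = P := by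
      have h0 : P + ∑ i, D i i = 0 := htri.symm
      calc ∑ i, D i i = P + (P + ∑ i, D i i) := by
            rw [← add_assoc, zmod2_add_self, zero_add]
        _ = P := by rw [h0, add_zero]
    have hM1 : ∑ y ∈ fN, (∑ j, b.repr (c y.1) j) * (∑ l, b.repr (c y.2) l)
        = P + ∑ y ∈ fN, (∑ j, b.repr (c y.1) j * b.repr (c y.2) j) := by
      rw [hP, ← Finset.sum_add_distrib]
      refine Finset.sum_congr rfl fun y _ => ?_
      rw [Finset.sum_mul_sum, ← Fintype.sum_prod_type
        (f := fun w : Fin f × Fin f => b.repr (c y.1) w.1 * b.repr (c y.2) w.2)]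
      rw [show (∑ w : Fin f × Fin f, b.repr (c y.1) w.1 * b.repr (c y.2) w.2)
          = ∑ j, ∑ l, (fun j l => b.repr (c y.1) j * b.repr (c y.2) l) j l from
          Fintype.sum_prod_type _]
      rw [sum_trichotomy (fun j l => b.repr (c y.1) j * b.repr (c y.2) l)]
      congr 1
      · simp only [hD, hfF]
        rw [Finset.sum_add_distrib]
        congr 1
        refine Finset.sum_congr rfl fun w _ => ?_
        rw [mul_comm]
    rw [hM1, hM2P]
    rw [add_comm P, add_assoc, zmod2_add_self, add_zero]
    exact hdot
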